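/- Let 0 < μ ≤ 1, ζ > 0, ϑ ≥ μζ, 0 < θ ≤ 1, λ > 0, let (Ω, F, ℙ) be a probability space and H : Ω → [0,∞) a random variable with 𝔼[E_{μ,ϑ}^{ζ}(2λ H^θ)] < ∞. Then the TCFCP pmf z(n) = 𝔼[P(n,H)] satisfies ∑_{n=0}^∞ z(n) = 1, and consequently 1 − ∑_{n=1}^∞ z(n) = z(0) = Γ(ϑ) ∑_{k=0}^∞ ( (−λ)^k (ζ)_k / (k! Γ(μk+ϑ)) ) · 𝔼[H^{θk}]. -/

import Mathlib

open Real MeasureTheory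

/-- Rising factorial (Pochhammer symbol) `(ζ)_n = Γ(ζ+n)/Γ(ζ)`. -/
noncomputable def risingFactorial (ζ : ℝ) (n : ℕ) : ℝ :=
  Real.Gamma (ζ + n) / Real.Gamma ζ

/-- Three-parameter (Prabhakar) Mittag-Leffler function. -/
noncomputable def mittagLeffler (μ ϑ ζ z : ℝ) : ℝ :=
  ∑' m : ℕ, risingFactorial ζ m * z ^ m / (m.factorial * Real.Gamma (μ * m + ϑ))

/-- Probability function of the fractional counting process. -/
noncomputable def fcpP (μ ϑ ζ θ lam : ℝ) (n : ℕ) (t : ℝ) : ℝ :=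
  risingFactorial ζ n * Real.Gamma ϑ * (lam * t ^ θ) ^ n / n.factorial *
    ∑' k : ℕ, risingFactorial (ζ + n) k * (-(lam * t ^ θ)) ^ k /
      (k.factorial * Real.Gamma (μ * (n + k : ℕ) + ϑ))

open Filter
open scoped ENNReal NNReal

set_option linter.unusedSectionVars false

lemma ofReal_norm_eq_coe_nnnorm (a : ℝ) : ENNReal.ofReal ‖a‖ = (‖a‖₊ : ℝ≥0∞) :=
  ofReal_norm a


lemma rF_zero {ζ : ℝ} (hζ : 0 < ζ) : risingFactorial ζ 0 = 1 := by
  simp [risingFactorial, div_self (Real.Gamma_pos_of_pos hζ).ne']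

lemma rF_succ {ζ : ℝ} (hζ : 0 < ζ) (n : ℕ) :
    risingFactorial ζ (n+1) = risingFactorial ζ n * (ζ + n) := by
  have h : ζ + (n:ℝ) ≠ 0 := by positivity
  have : ζ + ((n:ℕ)+1 : ℕ) = (ζ + n) + 1 := by push_cast; ring
  rw [risingFactorial, risingFactorial, this, Real.Gamma_add_one h]
  ring

lemma rF_pos {ζ : ℝ} (hζ : 0 < ζ) (n : ℕ) : 0 < risingFactorial ζ n := by
  have h1 : (0:ℝ) < Real.Gamma (ζ + n) := Real.Gamma_pos_of_pos (by positivity)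
  exact div_pos h1 (Real.Gamma_pos_of_pos hζ)

lemma rF_mul {ζ : ℝ} (hζ : 0 < ζ) (n k : ℕ) :
    risingFactorial ζ n * risingFactorial (ζ + n) k = risingFactorial ζ (n + k) := by
  have h1 : Real.Gamma (ζ + n) ≠ 0 := (Real.Gamma_pos_of_pos (by positivity)).ne'
  have h2 : ζ + ((n + k : ℕ):ℝ) = (ζ + n) + k := by push_cast; ring
  rw [risingFactorial, risingFactorial, risingFactorial, h2]
  field_simp

lemma rF_le {ζ : ℝ} (hζ : 0 < ζ) (n : ℕ) :
    risingFactorial ζ n ≤ (ζ + 1)^n * n.factorial := by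
  induction n with
  | zero => simp [rF_zero hζ]
  | succ n ih =>
    rw [rF_succ hζ]
    have h1 : (0:ℝ) ≤ ζ + n := by positivity
    have h2 : ζ + (n:ℝ) ≤ (ζ+1) * (n+1) := by nlinarith [Nat.cast_nonneg (α := ℝ) n]
    calc risingFactorial ζ n * (ζ + n) ≤ ((ζ+1)^n * n.factorial) * ((ζ+1)*(n+1)) := by
          apply mul_le_mul ih h2 h1
          positivity
      _ = (ζ+1)^(n+1) * (n+1).factorial := by
          push_cast [Nat.factorial_succ]; ring


lemma Gamma_mono {x y : ℝ} (hx : 2 ≤ x) (hxy : x ≤ y) : Real.Gamma x ≤ Real.Gamma y :=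
  Real.Gamma_strictMonoOn_Ici.monotoneOn hx (le_trans hx hxy) hxy

lemma Gamma_ge_pow_eventually {μ ϑ : ℝ} (hμ : 0 < μ) (hϑ : 0 < ϑ) {c : ℝ} (hc : 1 < c) :
    ∀ᶠ m : ℕ in atTop, c ^ m ≤ Real.Gamma (μ * m + ϑ) := by
  set c' : ℝ := c ^ (2/μ) with hc'def
  have hc'1 : 1 < c' := by
    rw [hc'def]
    exact Real.one_lt_rpow_iff_of_pos (by linarith) |>.mpr (Or.inl ⟨hc, by positivity⟩)
  have hc'0 : 0 < c' := lt_trans one_pos hc'1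
  -- eventually c'^q ≤ q!
  have h0 : Tendsto (fun q : ℕ => c' ^ q / q.factorial) atTop (nhds 0) :=
    (Real.summable_pow_div_factorial c').tendsto_atTop_zero
  obtain ⟨N, hN⟩ := (Metric.tendsto_atTop.mp h0 1 one_pos)
  have hfac : ∀ q ≥ N, c' ^ q ≤ q.factorial := by
    intro q hq
    have := hN q hq
    rw [Real.dist_eq, sub_zero, abs_of_nonneg (by positivity)] at this
    have hfq : (0:ℝ) < q.factorial := by positivity
    rw [div_lt_one hfq] at this
    exact this.le
  rw [eventually_atTop]
  refine ⟨Nat.ceil ((N + 4)/μ), fun m hm => ?_⟩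
  have hm' : ((N:ℝ) + 4)/μ ≤ m := le_trans (Nat.le_ceil _) (by exact_mod_cast hm)
  have hμm : (N:ℝ) + 4 ≤ μ * m := by
    rw [div_le_iff₀ hμ] at hm'; linarith
  set x := μ * m + ϑ with hx
  have hx4 : (N:ℝ) + 4 ≤ x := by rw [hx]; linarith
  set F := Nat.floor x with hF
  have hxF : (F:ℝ) ≤ x := Nat.floor_le (by linarith)
  have hFx : x - 1 < F := Nat.sub_one_lt_floor x
  have hFN : N + 3 ≤ F := by
    have : ((N:ℝ)) + 3 ≤ x - 1 := by linarith
    exact_mod_cast (this.trans_lt hFx).le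
  set q := F - 1 with hq
  have hFq : F = q + 1 := by omega
  have hqN : N ≤ q := by omega
  -- c^m ≤ c'^(μm/2)
  have e1 : (c:ℝ) ^ m = c' ^ (μ * m / 2) := by
    rw [hc'def, ← Real.rpow_natCast c m, ← Real.rpow_mul (by linarith)]
    congr 1
    field_simp
  have e2 : c' ^ (μ * m / 2) ≤ c' ^ ((q:ℝ)) := by
    apply Real.rpow_le_rpow_left_iff hc'1 |>.mpr
    have : (q:ℝ) = (F:ℝ) - 1 := by rw [hFq]; push_cast; ring
    rw [this]
    nlinarith
  have e3 : c' ^ ((q:ℝ)) = c' ^ q := Real.rpow_natCast c' q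
  have e4 : (q.factorial : ℝ) = Real.Gamma F := by
    rw [hFq]; push_cast [Real.Gamma_nat_eq_factorial]; norm_num
  have e5 : Real.Gamma (F:ℝ) ≤ Real.Gamma x := by
    apply Gamma_mono _ hxF
    have : (2:ℕ) ≤ F := by omega
    exact_mod_cast this
  calc c ^ m = c' ^ (μ * m / 2) := e1
    _ ≤ c' ^ ((q:ℝ)) := e2
    _ = c' ^ q := e3
    _ ≤ q.factorial := hfac q hqN
    _ = Real.Gamma F := e4
    _ ≤ Real.Gamma x := e5

lemma ML_summable {μ ϑ ζ : ℝ} (hμ : 0 < μ) (hϑ : 0 < ϑ) (hζ : 0 < ζ) (y : ℝ) :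
    Summable (fun m : ℕ =>
      risingFactorial ζ m * y ^ m / (m.factorial * Real.Gamma (μ * m + ϑ))) := by
  set A : ℝ := (ζ + 1) * (|y| + 1) with hA
  clear_value A
  have hA0 : 0 < A := by rw [hA]; positivity
  have hc : 1 < 2 * A := by rw [hA]; nlinarith [abs_nonneg y]
  have hg : Summable (fun m : ℕ => (1/2 : ℝ)^m) :=
    summable_geometric_of_lt_one (by norm_num) (by norm_num)
  apply summable_of_isBigO_nat hg
  rw [Asymptotics.isBigO_iff]
  refine ⟨1, ?_⟩
  filter_upwards [Gamma_ge_pow_eventually hμ hϑ hc] with m hm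
  have hΓpos : (0:ℝ) < Real.Gamma (μ * m + ϑ) := Real.Gamma_pos_of_pos (by positivity)
  have hfm : (0:ℝ) < m.factorial := by positivity
  have hnorm : ‖risingFactorial ζ m * y ^ m / (m.factorial * Real.Gamma (μ * m + ϑ))‖
      = risingFactorial ζ m * |y| ^ m / (m.factorial * Real.Gamma (μ * m + ϑ)) := by
    rw [norm_div, norm_mul, norm_mul, norm_pow]
    rw [Real.norm_eq_abs, Real.norm_eq_abs, Real.norm_eq_abs, Real.norm_eq_abs,
      abs_of_pos (rF_pos hζ m), abs_of_pos hfm, abs_of_pos hΓpos]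
  rw [hnorm]
  have key : risingFactorial ζ m * |y| ^ m ≤ m.factorial * A ^ m := by
    calc risingFactorial ζ m * |y| ^ m ≤ ((ζ+1)^m * m.factorial) * (|y|+1) ^ m := by
          apply mul_le_mul (rF_le hζ m) (pow_le_pow_left₀ (abs_nonneg y) (by linarith) m)
            (by positivity) (by positivity)
      _ = m.factorial * A ^ m := by rw [hA, mul_pow]; ring
  have hden : m.factorial * A ^ m / (m.factorial * ((2*A) ^ m)) = (1/2:ℝ)^m := by
    field_simp
    rw [mul_pow]
    rw [one_div_pow, mul_one_div, mul_div_cancel_left₀ _ (pow_ne_zero m (two_ne_zero : (2:ℝ) ≠ 0))]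
  calc risingFactorial ζ m * |y| ^ m / (m.factorial * Real.Gamma (μ * m + ϑ))
      ≤ m.factorial * A ^ m / (m.factorial * ((2*A) ^ m)) := by
        apply div_le_div₀ (by positivity) key (by positivity)
        exact mul_le_mul_of_nonneg_left hm (le_of_lt hfm)
    _ = (1/2:ℝ)^m := hden
    _ ≤ 1 * ‖(1/2:ℝ)^m‖ := by
        rw [one_mul, norm_pow, Real.norm_eq_abs]
        norm_num [abs_of_pos]

noncomputable def Habs (μ ϑ ζ x : ℝ) (p : ℕ × ℕ) : ℝ :=
  Real.Gamma ϑ * risingFactorial ζ (p.1 + p.2) * x ^ (p.1 + p.2) /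
    (p.1.factorial * p.2.factorial * Real.Gamma (μ * ((p.1 + p.2 : ℕ) : ℝ) + ϑ))

noncomputable def Hsgn (μ ϑ ζ x : ℝ) (p : ℕ × ℕ) : ℝ :=
  risingFactorial ζ p.1 * Real.Gamma ϑ * x ^ p.1 / p.1.factorial *
    (risingFactorial (ζ + p.1) p.2 * (-x) ^ p.2 /
      (p.2.factorial * Real.Gamma (μ * ((p.1 + p.2 : ℕ) : ℝ) + ϑ)))

section double
variable {μ ϑ ζ x : ℝ} (hμ : 0 < μ) (hϑ : 0 < ϑ) (hζ : 0 < ζ) (hx : 0 ≤ x)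

lemma sum_antidiag_pow (m : ℕ) (a b : ℝ) :
    ∑ p ∈ Finset.HasAntidiagonal.antidiagonal m, a ^ p.1 * b ^ p.2 / (p.1.factorial * p.2.factorial)
      = (a + b) ^ m / m.factorial := by
  rw [Finset.Nat.sum_antidiagonal_eq_sum_range_succ_mk, add_pow, Finset.sum_div]
  refine Finset.sum_congr rfl fun i hi => ?_
  have him : i ≤ m := Nat.lt_succ_iff.mp (Finset.mem_range.mp hi)
  have hfact : ((m.choose i : ℝ)) * i.factorial * (m - i).factorial = m.factorial := by
    exact_mod_cast congrArg (Nat.cast : ℕ → ℝ) (Nat.choose_mul_factorial_mul_factorial him)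
  rw [div_eq_div_iff (by positivity) (by positivity), ← hfact]
  ring

include hμ hϑ hζ hx in
lemma Habs_nonneg (p : ℕ × ℕ) : 0 ≤ Habs μ ϑ ζ x p := by
  rw [Habs]
  apply div_nonneg
  · exact mul_nonneg (mul_nonneg (Real.Gamma_pos_of_pos hϑ).le (rF_pos hζ _).le)
      (pow_nonneg hx _)
  · positivity

include hμ hϑ hζ in
lemma Habs_fiber (m : ℕ) :
    ∑ p ∈ Finset.HasAntidiagonal.antidiagonal m, Habs μ ϑ ζ x p
      = Real.Gamma ϑ *
        (risingFactorial ζ m * (2*x) ^ m / (m.factorial * Real.Gamma (μ * m + ϑ))) := by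
  have hΓ : (0:ℝ) < Real.Gamma (μ * m + ϑ) := Real.Gamma_pos_of_pos (by positivity)
  have step : ∀ p ∈ Finset.HasAntidiagonal.antidiagonal m, Habs μ ϑ ζ x p
      = (Real.Gamma ϑ * risingFactorial ζ m * x ^ m / Real.Gamma (μ * m + ϑ)) *
        ((1:ℝ) ^ p.1 * (1:ℝ) ^ p.2 / (p.1.factorial * p.2.factorial)) := by
    intro p hp
    have hpm : p.1 + p.2 = m := Finset.HasAntidiagonal.mem_antidiagonal.mp hp
    rw [Habs, hpm]
    simp only [one_pow, one_mul]
    rw [div_mul_div_comm, div_eq_div_iff (by positivity) (by positivity)]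
    ring
  rw [Finset.sum_congr rfl step, ← Finset.mul_sum, sum_antidiag_pow m 1 1]
  have : ((1:ℝ) + 1) = 2 := by norm_num
  rw [this, mul_pow]
  field_simp

include hμ hϑ hζ in
lemma Hsgn_fiber (m : ℕ) :
    ∑ p ∈ Finset.HasAntidiagonal.antidiagonal m, Hsgn μ ϑ ζ x p = if m = 0 then 1 else 0 := by
  have hΓ : (0:ℝ) < Real.Gamma (μ * m + ϑ) := Real.Gamma_pos_of_pos (by positivity)
  have step : ∀ p ∈ Finset.HasAntidiagonal.antidiagonal m, Hsgn μ ϑ ζ x p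
      = (Real.Gamma ϑ * risingFactorial ζ m / Real.Gamma (μ * m + ϑ)) *
        (x ^ p.1 * (-x) ^ p.2 / (p.1.factorial * p.2.factorial)) := by
    intro p hp
    have hpm : p.1 + p.2 = m := Finset.HasAntidiagonal.mem_antidiagonal.mp hp
    rw [Hsgn, ← hpm, ← rF_mul hζ p.1 p.2]
    rw [div_mul_div_comm, div_mul_div_comm, div_eq_div_iff (by positivity) (by positivity)]
    ring
  rw [Finset.sum_congr rfl step, ← Finset.mul_sum, sum_antidiag_pow m x (-x)]
  rcases Nat.eq_zero_or_pos m with hm | hm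
  · subst hm
    simp [rF_zero hζ, Real.Gamma_pos_of_pos hϑ, div_self (Real.Gamma_pos_of_pos hϑ).ne']
  · rw [if_neg hm.ne']
    rw [add_neg_cancel, zero_pow hm.ne']
    simp

include hμ hϑ hζ hx in
lemma Hsgn_eq (p : ℕ × ℕ) : Hsgn μ ϑ ζ x p = (-1 : ℝ) ^ p.2 * Habs μ ϑ ζ x p := by
  rw [Hsgn, Habs, ← rF_mul hζ p.1 p.2, neg_pow, pow_add]
  ring

include hμ hϑ hζ hx in
lemma Hsgn_abs (p : ℕ × ℕ) : ‖Hsgn μ ϑ ζ x p‖ = Habs μ ϑ ζ x p := by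
  rw [Hsgn_eq hμ hϑ hζ hx, norm_mul, norm_pow, norm_neg, norm_one, one_pow, one_mul,
    Real.norm_eq_abs, abs_of_nonneg (Habs_nonneg hμ hϑ hζ hx p)]

set_option maxHeartbeats 1000000 in
include hμ hϑ hζ hx in
lemma Habs_summable : Summable (Habs μ ϑ ζ x) ∧
    ∑' p : ℕ × ℕ, Habs μ ϑ ζ x p
      = Real.Gamma ϑ * ∑' m : ℕ,
          risingFactorial ζ m * (2*x) ^ m / (m.factorial * Real.Gamma (μ * m + ϑ)) := by
  classical
  let σ := Finset.HasAntidiagonal.sigmaAntidiagonalEquivProd (A := ℕ)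
  have hfib : ∀ m : ℕ, ∑' (p : (Finset.HasAntidiagonal.antidiagonal m : Finset (ℕ × ℕ))),
      Habs μ ϑ ζ x p = Real.Gamma ϑ *
        (risingFactorial ζ m * (2*x) ^ m / (m.factorial * Real.Gamma (μ * m + ϑ))) := by
    intro m
    rw [Finset.tsum_subtype (Finset.HasAntidiagonal.antidiagonal m) (Habs μ ϑ ζ x)]
    exact Habs_fiber hμ hϑ hζ m
  have hfibsum : ∀ m : ℕ, Summable (fun p : (Finset.HasAntidiagonal.antidiagonal m : Finset (ℕ × ℕ)) =>
      Habs μ ϑ ζ x ((σ ⟨m, p⟩ : ℕ × ℕ))) := fun m => Summable.of_finite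
  have hcomp : ∀ (i : Σ m : ℕ, (Finset.HasAntidiagonal.antidiagonal m : Finset (ℕ × ℕ))),
      Habs μ ϑ ζ x (σ i) = Habs μ ϑ ζ x i.2 := fun i => rfl
  have houter : Summable (fun m : ℕ => ∑' (p : (Finset.HasAntidiagonal.antidiagonal m : Finset (ℕ × ℕ))),
      Habs μ ϑ ζ x ((σ ⟨m, p⟩ : ℕ × ℕ))) := by
    have : (fun m : ℕ => ∑' (p : (Finset.HasAntidiagonal.antidiagonal m : Finset (ℕ × ℕ))),
        Habs μ ϑ ζ x ((σ ⟨m, p⟩ : ℕ × ℕ)))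
        = fun m : ℕ => Real.Gamma ϑ *
          (risingFactorial ζ m * (2*x) ^ m / (m.factorial * Real.Gamma (μ * m + ϑ))) := by
      funext m; exact hfib m
    rw [this]
    exact (ML_summable hμ hϑ hζ (2*x)).mul_left _
  have hsig : Summable (fun i : (Σ m : ℕ, (Finset.HasAntidiagonal.antidiagonal m : Finset (ℕ × ℕ))) =>
      Habs μ ϑ ζ x (σ i)) := by
    rw [summable_sigma_of_nonneg (fun i => Habs_nonneg hμ hϑ hζ hx _)]
    exact ⟨hfibsum, houter⟩
  have hsum : Summable (Habs μ ϑ ζ x) := σ.summable_iff.mp hsig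
  refine ⟨hsum, ?_⟩
  have h1 : ∑' p : ℕ × ℕ, Habs μ ϑ ζ x p
      = ∑' i : (Σ m : ℕ, (Finset.HasAntidiagonal.antidiagonal m : Finset (ℕ × ℕ))), Habs μ ϑ ζ x (σ i) :=
    (σ.tsum_eq (Habs μ ϑ ζ x)).symm
  rw [h1, Summable.tsum_sigma' hfibsum hsig]
  calc ∑' m : ℕ, ∑' (p : (Finset.HasAntidiagonal.antidiagonal m : Finset (ℕ × ℕ))),
        Habs μ ϑ ζ x ((σ ⟨m, p⟩ : ℕ × ℕ))
      = ∑' m : ℕ, Real.Gamma ϑ *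
          (risingFactorial ζ m * (2*x) ^ m / (m.factorial * Real.Gamma (μ * m + ϑ))) := by
        exact tsum_congr hfib
    _ = Real.Gamma ϑ * ∑' m : ℕ,
          risingFactorial ζ m * (2*x) ^ m / (m.factorial * Real.Gamma (μ * m + ϑ)) :=
        tsum_mul_left

include hμ hϑ hζ hx in
lemma Hsgn_summable : Summable (Hsgn μ ϑ ζ x) := by
  apply Summable.of_norm
  have : (fun p => ‖Hsgn μ ϑ ζ x p‖) = Habs μ ϑ ζ x := funext fun p => Hsgn_abs hμ hϑ hζ hx p
  rw [this]
  exact (Habs_summable hμ hϑ hζ hx).1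

set_option maxHeartbeats 1000000 in
include hμ hϑ hζ hx in
lemma Hsgn_tsum : ∑' p : ℕ × ℕ, Hsgn μ ϑ ζ x p = 1 := by
  classical
  let σ := Finset.HasAntidiagonal.sigmaAntidiagonalEquivProd (A := ℕ)
  have hfib : ∀ m : ℕ, ∑' (p : (Finset.HasAntidiagonal.antidiagonal m : Finset (ℕ × ℕ))),
      Hsgn μ ϑ ζ x p = if m = 0 then 1 else 0 := by
    intro m
    rw [Finset.tsum_subtype (Finset.HasAntidiagonal.antidiagonal m) (Hsgn μ ϑ ζ x)]
    exact Hsgn_fiber hμ hϑ hζ m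
  have hfibsum : ∀ m : ℕ, Summable (fun p : (Finset.HasAntidiagonal.antidiagonal m : Finset (ℕ × ℕ)) =>
      Hsgn μ ϑ ζ x ((σ ⟨m, p⟩ : ℕ × ℕ))) := fun m => Summable.of_finite
  have hsig : Summable (fun i : (Σ m : ℕ, (Finset.HasAntidiagonal.antidiagonal m : Finset (ℕ × ℕ))) =>
      Hsgn μ ϑ ζ x (σ i)) := σ.summable_iff.mpr (Hsgn_summable hμ hϑ hζ hx)
  have h1 : ∑' p : ℕ × ℕ, Hsgn μ ϑ ζ x p
      = ∑' i : (Σ m : ℕ, (Finset.HasAntidiagonal.antidiagonal m : Finset (ℕ × ℕ))), Hsgn μ ϑ ζ x (σ i) :=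
    (σ.tsum_eq (Hsgn μ ϑ ζ x)).symm
  rw [h1, Summable.tsum_sigma' hfibsum hsig]
  have h2 : ∑' m : ℕ, ∑' (p : (Finset.HasAntidiagonal.antidiagonal m : Finset (ℕ × ℕ))),
      Hsgn μ ϑ ζ x ((σ ⟨m, p⟩ : ℕ × ℕ)) = ∑' m : ℕ, if m = 0 then (1:ℝ) else 0 :=
    tsum_congr hfib
  rw [h2, tsum_eq_single 0 (fun m hm => if_neg hm)]
  simp

include hμ hϑ hζ hx in
lemma Hsgn_marginal (n : ℕ) : Summable (fun k => Hsgn μ ϑ ζ x (n, k)) :=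
  (Hsgn_summable hμ hϑ hζ hx).prod_factor n

include hμ hϑ hζ hx in
lemma Habs_marginal (n : ℕ) : Summable (fun k => Habs μ ϑ ζ x (n, k)) :=
  (Habs_summable hμ hϑ hζ hx).1.prod_factor n

include hμ hϑ hζ hx in
lemma Habs_marginal_sum : HasSum (fun n => ∑' k, Habs μ ϑ ζ x (n, k))
    (∑' p : ℕ × ℕ, Habs μ ϑ ζ x p) :=
  (Habs_summable hμ hϑ hζ hx).1.hasSum.prod_fiberwise
    (fun n => (Habs_marginal hμ hϑ hζ hx n).hasSum)

include hμ hϑ hζ hx in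
lemma Hsgn_tsum_marginal : ∑' n : ℕ, ∑' k : ℕ, Hsgn μ ϑ ζ x (n, k) = 1 := by
  rw [← Summable.tsum_prod' (Hsgn_summable hμ hϑ hζ hx) (Hsgn_summable hμ hϑ hζ hx).prod_factor]
  exact Hsgn_tsum hμ hϑ hζ hx

include hμ hϑ hζ hx in
lemma Hsgn_marginal_bound (n : ℕ) :
    ‖∑' k : ℕ, Hsgn μ ϑ ζ x (n, k)‖ ≤ ∑' k : ℕ, Habs μ ϑ ζ x (n, k) := by
  have h1 : Summable fun k => ‖Hsgn μ ϑ ζ x (n, k)‖ := by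
    have : (fun k => ‖Hsgn μ ϑ ζ x (n, k)‖) = fun k => Habs μ ϑ ζ x (n, k) :=
      funext fun k => Hsgn_abs hμ hϑ hζ hx _
    rw [this]; exact Habs_marginal hμ hϑ hζ hx n
  refine (norm_tsum_le_tsum_norm h1).trans_eq ?_
  exact tsum_congr fun k => Hsgn_abs hμ hϑ hζ hx _

end double


lemma fcpP_eq (μ ϑ ζ θ lam : ℝ) (n : ℕ) (t : ℝ) :
    fcpP μ ϑ ζ θ lam n t = ∑' k, Hsgn μ ϑ ζ (lam * t ^ θ) (n, k) := by
  rw [fcpP, ← tsum_mul_left]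
  exact tsum_congr fun k => by rw [Hsgn]
/-- The TCFCP pmf `z(n) = 𝔼[P(n,H)]` satisfies `∑_n z(n) = 1`, hence
`1 − ∑_{n≥1} z(n) = z(0) = Γ(ϑ) ∑_k (−λ)^k (ζ)_k/(k! Γ(μk+ϑ)) 𝔼[H^{θk}]`. -/
theorem tcfcp_pmf_sums_to_one {Ω : Type*} [MeasurableSpace Ω] (P : Measure Ω)
    [IsProbabilityMeasure P]
    (μ ϑ ζ θ lam : ℝ) (hμ : 0 < μ) (hμ1 : μ ≤ 1) (hζ : 0 < ζ) (hϑ : μ * ζ ≤ ϑ)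
    (hθ : 0 < θ) (hθ1 : θ ≤ 1) (hlam : 0 < lam)
    (H : Ω → ℝ) (hHm : Measurable H) (hH0 : ∀ ω, 0 ≤ H ω)
    (hint : Integrable (fun ω => mittagLeffler μ ϑ ζ (2 * lam * H ω ^ θ)) P)
    (z : ℕ → ℝ) (hz : ∀ n, z n = ∫ ω, fcpP μ ϑ ζ θ lam n (H ω) ∂P) :
    (∑' n : ℕ, z n = 1) ∧
    (1 - ∑' n : ℕ, z (n + 1) = z 0) ∧
    (z 0 = Real.Gamma ϑ * ∑' k : ℕ,
      (-lam) ^ k * risingFactorial ζ k / (k.factorial * Real.Gamma (μ * k + ϑ)) *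
        ∫ ω, H ω ^ (θ * (k : ℝ)) ∂P) := by
  have hϑ0 : 0 < ϑ := lt_of_lt_of_le (mul_pos hμ hζ) hϑ
  have hx0 : ∀ ω, 0 ≤ lam * H ω ^ θ := fun ω => mul_nonneg hlam.le (Real.rpow_nonneg (hH0 ω) θ)
  have hxm : Measurable (fun ω => lam * H ω ^ θ) :=
    ((Real.continuous_rpow_const hθ.le).measurable.comp hHm).const_mul lam
  have hterm_m : ∀ n k : ℕ, Measurable (fun ω => Hsgn μ ϑ ζ (lam * H ω ^ θ) (n, k)) := by
    intro n k
    simp only [Hsgn]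
    exact (((hxm.pow_const n).const_mul _).div_const _).mul
      (((hxm.neg.pow_const k).const_mul _).div_const _)
  have habs_m : ∀ n k : ℕ, Measurable (fun ω => Habs μ ϑ ζ (lam * H ω ^ θ) (n, k)) := by
    intro n k
    simp only [Habs]
    exact ((hxm.pow_const (n + k)).const_mul _).div_const _
  have hSm : ∀ n : ℕ, Measurable (fun ω => ∑' k, Hsgn μ ϑ ζ (lam * H ω ^ θ) (n, k)) := by
    intro n
    refine measurable_of_tendsto_metrizable'
      (f := fun N ω => ∑ k ∈ Finset.range N, Hsgn μ ϑ ζ (lam * H ω ^ θ) (n, k)) atTop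
      (fun N => Finset.measurable_sum _ fun k _ => hterm_m n k) ?_
    rw [tendsto_pi_nhds]
    intro ω
    exact (Hsgn_marginal hμ hϑ0 hζ (hx0 ω) n).hasSum.tendsto_sum_nat
  have hBm : ∀ n : ℕ, Measurable (fun ω => ∑' k, Habs μ ϑ ζ (lam * H ω ^ θ) (n, k)) := by
    intro n
    refine measurable_of_tendsto_metrizable'
      (f := fun N ω => ∑ k ∈ Finset.range N, Habs μ ϑ ζ (lam * H ω ^ θ) (n, k)) atTop
      (fun N => Finset.measurable_sum _ fun k _ => habs_m n k) ?_
    rw [tendsto_pi_nhds]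
    intro ω
    exact (Habs_marginal hμ hϑ0 hζ (hx0 ω) n).hasSum.tendsto_sum_nat
  have hBnn : ∀ (n : ℕ) ω, 0 ≤ ∑' k, Habs μ ϑ ζ (lam * H ω ^ θ) (n, k) :=
    fun n ω => tsum_nonneg fun k => Habs_nonneg hμ hϑ0 hζ (hx0 ω) _
  have hBsum : ∀ ω, HasSum (fun n => ∑' k, Habs μ ϑ ζ (lam * H ω ^ θ) (n, k))
      (Real.Gamma ϑ * mittagLeffler μ ϑ ζ (2 * lam * H ω ^ θ)) := by
    intro ω
    have h := Habs_marginal_sum hμ hϑ0 hζ (hx0 ω)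
    rw [(Habs_summable hμ hϑ0 hζ (hx0 ω)).2] at h
    have e : mittagLeffler μ ϑ ζ (2 * lam * H ω ^ θ)
        = ∑' m : ℕ, risingFactorial ζ m * (2 * (lam * H ω ^ θ)) ^ m /
            (m.factorial * Real.Gamma (μ * m + ϑ)) := by
      rw [mittagLeffler, mul_assoc]
    rw [e]
    exact h
  have hintl : ∫⁻ ω, ENNReal.ofReal
      (Real.Gamma ϑ * mittagLeffler μ ϑ ζ (2 * lam * H ω ^ θ)) ∂P ≠ ∞ := by
    have hb : ∀ ω, ENNReal.ofReal (Real.Gamma ϑ * mittagLeffler μ ϑ ζ (2 * lam * H ω ^ θ))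
        ≤ ENNReal.ofReal (Real.Gamma ϑ) * ‖mittagLeffler μ ϑ ζ (2 * lam * H ω ^ θ)‖₊ := by
      intro ω
      rw [ENNReal.ofReal_mul (Real.Gamma_pos_of_pos hϑ0).le]
      apply mul_le_mul_right
      rw [← ofReal_norm_eq_coe_nnnorm, Real.norm_eq_abs]
      exact ENNReal.ofReal_le_ofReal (le_abs_self _)
    have h2 : ∫⁻ ω, ENNReal.ofReal (Real.Gamma ϑ) *
        ‖mittagLeffler μ ϑ ζ (2 * lam * H ω ^ θ)‖₊ ∂P ≠ ∞ := by
      rw [lintegral_const_mul' _ _ ENNReal.ofReal_ne_top]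
      exact ENNReal.mul_ne_top ENNReal.ofReal_ne_top hint.hasFiniteIntegral.ne
    exact ne_top_of_le_ne_top h2 (lintegral_mono hb)
  have hfeq : ∀ (n : ℕ) ω, fcpP μ ϑ ζ θ lam n (H ω)
      = ∑' k, Hsgn μ ϑ ζ (lam * H ω ^ θ) (n, k) :=
    fun n ω => fcpP_eq μ ϑ ζ θ lam n (H ω)
  have hSb : ∀ (n : ℕ) ω, (‖fcpP μ ϑ ζ θ lam n (H ω)‖₊ : ℝ≥0∞)
      ≤ ENNReal.ofReal (∑' k, Habs μ ϑ ζ (lam * H ω ^ θ) (n, k)) := by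
    intro n ω
    rw [← ofReal_norm_eq_coe_nnnorm]
    apply ENNReal.ofReal_le_ofReal
    rw [hfeq]
    exact Hsgn_marginal_bound hμ hϑ0 hζ (hx0 ω) n
  have h3 : ∀ ω, ∑' n : ℕ, ENNReal.ofReal (∑' k, Habs μ ϑ ζ (lam * H ω ^ θ) (n, k))
      = ENNReal.ofReal (Real.Gamma ϑ * mittagLeffler μ ϑ ζ (2 * lam * H ω ^ θ)) := by
    intro ω
    rw [← ENNReal.ofReal_tsum_of_nonneg (fun n => hBnn n ω) (hBsum ω).summable,
      (hBsum ω).tsum_eq]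
  have key1 : ∑' n : ℕ, ∫⁻ ω, ‖fcpP μ ϑ ζ θ lam n (H ω)‖₊ ∂P ≠ ∞ := by
    have h1 : ∑' n : ℕ, ∫⁻ ω, ‖fcpP μ ϑ ζ θ lam n (H ω)‖₊ ∂P
        ≤ ∑' n : ℕ, ∫⁻ ω, ENNReal.ofReal (∑' k, Habs μ ϑ ζ (lam * H ω ^ θ) (n, k)) ∂P :=
      ENNReal.tsum_le_tsum fun n => lintegral_mono fun ω => hSb n ω
    have h2 : ∑' n : ℕ, ∫⁻ ω, ENNReal.ofReal (∑' k, Habs μ ϑ ζ (lam * H ω ^ θ) (n, k)) ∂P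
        = ∫⁻ ω, ∑' n : ℕ, ENNReal.ofReal (∑' k, Habs μ ϑ ζ (lam * H ω ^ θ) (n, k)) ∂P :=
      (lintegral_tsum fun n => ((hBm n).ennreal_ofReal).aemeasurable).symm
    have h4 : ∑' n : ℕ, ∫⁻ ω, ENNReal.ofReal
        (∑' k, Habs μ ϑ ζ (lam * H ω ^ θ) (n, k)) ∂P ≠ ∞ := by
      rw [h2, lintegral_congr h3]
      exact hintl
    exact ne_top_of_le_ne_top h4 h1
  have hSmeas : ∀ n : ℕ, AEStronglyMeasurable (fun ω => fcpP μ ϑ ζ θ lam n (H ω)) P := by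
    intro n
    have he : (fun ω => fcpP μ ϑ ζ θ lam n (H ω))
        = fun ω => ∑' k, Hsgn μ ϑ ζ (lam * H ω ^ θ) (n, k) := funext fun ω => hfeq n ω
    rw [he]
    exact (hSm n).aestronglyMeasurable
  have hswap := integral_tsum hSmeas key1
  have hone : ∀ ω, ∑' n : ℕ, fcpP μ ϑ ζ θ lam n (H ω) = 1 := by
    intro ω
    calc ∑' n : ℕ, fcpP μ ϑ ζ θ lam n (H ω)
        = ∑' n : ℕ, ∑' k : ℕ, Hsgn μ ϑ ζ (lam * H ω ^ θ) (n, k) :=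
          tsum_congr fun n => hfeq n ω
      _ = 1 := Hsgn_tsum_marginal hμ hϑ0 hζ (hx0 ω)
  have part1 : ∑' n : ℕ, z n = 1 := by
    have hz'' : z = fun n => ∫ ω, fcpP μ ϑ ζ θ lam n (H ω) ∂P := funext hz
    rw [hz'', ← hswap]
    have he : (fun ω => ∑' n : ℕ, fcpP μ ϑ ζ θ lam n (H ω)) = fun _ => (1:ℝ) := funext hone
    rw [he]
    simp
  have hzsum : Summable z := by
    apply Summable.of_norm
    have hb : Summable (fun n : ℕ => (∫⁻ ω, ‖fcpP μ ϑ ζ θ lam n (H ω)‖₊ ∂P).toReal) :=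
      ENNReal.summable_toReal key1
    refine Summable.of_nonneg_of_le (fun n => norm_nonneg _) (fun n => ?_) hb
    rw [hz n]
    have hni := norm_integral_le_lintegral_norm (μ := P) (fun ω => fcpP μ ϑ ζ θ lam n (H ω))
    have heq : (∫⁻ ω, ENNReal.ofReal ‖fcpP μ ϑ ζ θ lam n (H ω)‖ ∂P)
        = ∫⁻ ω, ‖fcpP μ ϑ ζ θ lam n (H ω)‖₊ ∂P :=
      lintegral_congr fun ω => ofReal_norm_eq_coe_nnnorm _
    rw [← heq]
    exact hni
  have part2 : 1 - ∑' n : ℕ, z (n + 1) = z 0 := by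
    have h := Summable.tsum_eq_zero_add hzsum
    rw [part1] at h
    linarith
  have key2 : ∑' k : ℕ, ∫⁻ ω, ‖Hsgn μ ϑ ζ (lam * H ω ^ θ) (0, k)‖₊ ∂P ≠ ∞ := by
    have e1 : ∀ (k : ℕ) (ω : Ω), (‖Hsgn μ ϑ ζ (lam * H ω ^ θ) (0, k)‖₊ : ℝ≥0∞)
        = ENNReal.ofReal (Habs μ ϑ ζ (lam * H ω ^ θ) (0, k)) := by
      intro k ω
      rw [← ofReal_norm_eq_coe_nnnorm, Hsgn_abs hμ hϑ0 hζ (hx0 ω)]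
    have h2 : ∑' k : ℕ, ∫⁻ ω, ‖Hsgn μ ϑ ζ (lam * H ω ^ θ) (0, k)‖₊ ∂P
        = ∫⁻ ω, ∑' k : ℕ, ENNReal.ofReal (Habs μ ϑ ζ (lam * H ω ^ θ) (0, k)) ∂P := by
      simp_rw [e1]
      exact (lintegral_tsum fun k => ((habs_m 0 k).ennreal_ofReal).aemeasurable).symm
    rw [h2]
    have h3' : ∀ ω, ∑' k : ℕ, ENNReal.ofReal (Habs μ ϑ ζ (lam * H ω ^ θ) (0, k))
        ≤ ENNReal.ofReal (Real.Gamma ϑ * mittagLeffler μ ϑ ζ (2 * lam * H ω ^ θ)) := by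
      intro ω
      rw [← ENNReal.ofReal_tsum_of_nonneg (fun k => Habs_nonneg hμ hϑ0 hζ (hx0 ω) _)
        (Habs_marginal hμ hϑ0 hζ (hx0 ω) 0)]
      apply ENNReal.ofReal_le_ofReal
      exact le_hasSum (hBsum ω) 0 (fun n _ => hBnn n ω)
    exact ne_top_of_le_ne_top hintl (lintegral_mono h3')
  have hswap2 := integral_tsum (fun k => (hterm_m 0 k).aestronglyMeasurable) key2
  have hterm_eq : ∀ (k : ℕ) (ω : Ω), Hsgn μ ϑ ζ (lam * H ω ^ θ) (0, k)
      = Real.Gamma ϑ * ((-lam) ^ k * risingFactorial ζ k /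
          (k.factorial * Real.Gamma (μ * k + ϑ)) * (H ω ^ (θ * (k : ℝ)))) := by
    intro k ω
    have e2 : H ω ^ (θ * (k : ℝ)) = (H ω ^ θ) ^ k := by
      rw [Real.rpow_mul (hH0 ω), Real.rpow_natCast]
    have e3 : (-(lam * H ω ^ θ)) ^ k = (-lam) ^ k * (H ω ^ θ) ^ k := by
      rw [← neg_mul, mul_pow]
    simp only [Hsgn, Nat.cast_zero, add_zero, zero_add, pow_zero, Nat.factorial_zero,
      Nat.cast_one]
    rw [rF_zero hζ, e2, e3]
    ring
  have part3 : z 0 = Real.Gamma ϑ * ∑' k : ℕ,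
      (-lam) ^ k * risingFactorial ζ k / (k.factorial * Real.Gamma (μ * k + ϑ)) *
        ∫ ω, H ω ^ (θ * (k : ℝ)) ∂P := by
    rw [hz 0]
    have h0 : (fun ω => fcpP μ ϑ ζ θ lam 0 (H ω))
        = fun ω => ∑' k, Hsgn μ ϑ ζ (lam * H ω ^ θ) (0, k) := funext fun ω => hfeq 0 ω
    rw [h0, hswap2, ← tsum_mul_left]
    apply tsum_congr
    intro k
    have he : (fun ω => Hsgn μ ϑ ζ (lam * H ω ^ θ) (0, k))
        = fun ω => (Real.Gamma ϑ * ((-lam) ^ k * risingFactorial ζ k /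
            (k.factorial * Real.Gamma (μ * k + ϑ)))) * (H ω ^ (θ * (k : ℝ))) := by
      funext ω
      rw [hterm_eq k ω]
      ring
    rw [he, integral_const_mul]
    ring
  exact ⟨part1, part2, part3⟩
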